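/- Let q be a prime power with q ≡ −1 (mod 6) and let f(x) = x^{q−2} + 3·x^{q²−q−1} (i.e., t = 3 in 𝔽_q). Then f is a permutation polynomial of 𝔽_{q²}. -/

import Mathlib

private lemma pow_fix_aux {K : Type*} [Monoid K] {a : K} {p : ℕ} (h : a ^ p = a) :
    ∀ m : ℕ, a ^ (p ^ m) = a := by
  intro m
  induction m with
  | zero => simpa using rfl
  | succ k ih => rw [pow_succ, pow_mul, ih, h]

/-- Case (iii): let `q` be a prime power with `q ≡ -1 (mod 6)` and
`f(x) = x^(q-2) + 3·x^(q²-q-1)` (i.e. `t = 3`). Then `f` is a permutation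
polynomial of `𝔽_{q²}`. -/
theorem stmt_3 (p m q : ℕ) (hp : p.Prime) (hq : q = p ^ m) (hq2 : 2 < q)
    (hq6 : q % 6 = 5)
    (K : Type) [Field K] [Fintype K] (hK : Fintype.card K = q ^ 2) :
    Function.Bijective (fun x : K => x ^ (q - 2) + (3 : K) * x ^ (q ^ 2 - q - 1)) := by
  have hq5 : 5 ≤ q := by omega
  have hm : m ≠ 0 := by rintro rfl; simp at hq; omega
  -- characteristic of K is p
  obtain ⟨r, hr⟩ := CharP.exists K
  haveI := hr
  have hrp : r.Prime := CharP.char_is_prime K r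
  obtain ⟨n, -, hcard⟩ := FiniteField.card K r
  have hpr : p = r := by
    have hd : p ∣ r ^ (n : ℕ) := by
      rw [← hcard, hK, hq, ← pow_mul]
      exact dvd_pow_self p (by positivity)
    exact (Nat.prime_dvd_prime_iff_eq hp hrp).mp (hp.dvd_of_dvd_pow hd)
  subst hpr
  haveI : Fact p.Prime := ⟨hp⟩
  have hp2 : p ≠ 2 := by
    rintro rfl
    have h2q : 2 ∣ q := hq ▸ dvd_pow_self 2 hm
    omega
  have h2K : (2 : K) ≠ 0 := by
    intro h
    exact hp2 ((Nat.prime_dvd_prime_iff_eq hp Nat.prime_two).mp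
      ((CharP.cast_eq_zero_iff K p 2).mp h))
  -- Frobenius facts
  have hfrob_add : ∀ a b : K, (a + b) ^ q = a ^ q + b ^ q := by
    intro a b; rw [hq]; exact add_pow_char_pow a b p m
  have hfrob_sub : ∀ a b : K, (a - b) ^ q = a ^ q - b ^ q := by
    intro a b; rw [hq]; exact sub_pow_char_pow a b m
  have h3p : (3 : K) ^ p = 3 := by
    have := map_natCast (frobenius K p) 3
    simpa [frobenius_def] using this
  have h3q : (3 : K) ^ q = 3 := by rw [hq]; exact pow_fix_aux h3p m
  -- exponent identities
  obtain ⟨Q2, hQ2⟩ : ∃ c, q ^ 2 = c + 2 * q :=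
    ⟨q ^ 2 - 2 * q, by rw [Nat.sub_add_cancel (by nlinarith)]⟩
  have id1 : q - 2 + 1 + (q - 1) = (q - 1) * 2 := by omega
  have id2 : q ^ 2 - q - 1 + 1 + (q - 1) = q ^ 2 - 1 := by rw [hQ2]; omega
  have id3 : (q - 1) * (q + 1) = q ^ 2 - 1 := by
    rw [show q ^ 2 - 1 = q ^ 2 - 1 ^ 2 by norm_num, Nat.sq_sub_sq, Nat.mul_comm]
  have id4 : q ^ 2 - 1 + 1 = q ^ 2 := by rw [hQ2]; omega
  -- main identities for nonzero z
  have main : ∀ z : K, z ≠ 0 →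
      (z ^ (q - 2) + 3 * z ^ (q ^ 2 - q - 1)) * z * z ^ (q - 1) = (z ^ (q - 1)) ^ 2 + 3 ∧
      (z ^ (q - 1)) ^ q = (z ^ (q - 1))⁻¹ := by
    intro z hz
    have hzc : z ^ (q ^ 2) = z := by rw [← hK]; exact FiniteField.pow_card z
    have hz1 : z ^ (q ^ 2 - 1) = 1 := by
      apply mul_right_cancel₀ hz
      rw [one_mul, ← pow_succ, id4, hzc]
    have e1 : z ^ (q - 2) * z * z ^ (q - 1) = (z ^ (q - 1)) ^ 2 := by
      rw [← pow_succ, ← pow_add, id1, pow_mul]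
    have e2 : z ^ (q ^ 2 - q - 1) * z * z ^ (q - 1) = 1 := by
      rw [← pow_succ, ← pow_add, id2, hz1]
    constructor
    · calc (z ^ (q - 2) + 3 * z ^ (q ^ 2 - q - 1)) * z * z ^ (q - 1)
          = z ^ (q - 2) * z * z ^ (q - 1) + 3 * (z ^ (q ^ 2 - q - 1) * z * z ^ (q - 1)) := by
            ring
        _ = (z ^ (q - 1)) ^ 2 + 3 := by rw [e1, e2, mul_one]
    · have hu1 : (z ^ (q - 1)) ^ q * z ^ (q - 1) = 1 := by
        rw [← pow_succ, ← pow_mul, id3, hz1]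
      exact eq_inv_of_mul_eq_one_left hu1
  -- nonvanishing of u^2+3 on the unit circle
  have hA3 : ∀ u : K, u ^ q = u⁻¹ → u ≠ 0 → u ^ 2 + 3 ≠ 0 := by
    intro u huq hu0 h
    have hu2 : u ^ 2 = -3 := by linear_combination h
    have h1 : (u ^ 2) ^ q * u ^ 2 = 1 := by
      rw [pow_right_comm, huq]
      field_simp
    rw [hu2] at h1
    have hodd : Odd q := Nat.odd_iff.mpr (by omega)
    rw [show ((-3 : K)) = -(3 : K) by ring, Odd.neg_pow hodd, h3q] at h1
    have h8 : ((8 : ℕ) : K) = 0 := by push_cast; linear_combination h1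
    have hdvd : p ∣ 8 := (CharP.cast_eq_zero_iff K p 8).mp h8
    rw [show (8 : ℕ) = 2 ^ 3 by norm_num] at hdvd
    exact hp2 ((Nat.prime_dvd_prime_iff_eq hp Nat.prime_two).mp (hp.dvd_of_dvd_pow hdvd))
  -- nonzero values at nonzero points
  have hfz : ∀ z : K, z ≠ 0 → z ^ (q - 2) + 3 * z ^ (q ^ 2 - q - 1) ≠ 0 := by
    intro z hz h
    obtain ⟨h1, h2⟩ := main z hz
    rw [h, zero_mul, zero_mul] at h1
    exact hA3 _ h2 (pow_ne_zero _ hz) (by linear_combination - h1)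
  rw [← Finite.injective_iff_bijective]
  intro x y hxy
  dsimp only at hxy
  by_cases hx : x = 0
  · subst hx
    rw [zero_pow (show q - 2 ≠ 0 by omega), zero_pow (show q ^ 2 - q - 1 ≠ 0 by rw [hQ2]; omega),
      mul_zero, add_zero] at hxy
    by_contra hne
    exact hfz y (fun h => hne (h ▸ rfl)) hxy.symm
  by_cases hy : y = 0
  · subst hy
    rw [zero_pow (show q - 2 ≠ 0 by omega), zero_pow (show q ^ 2 - q - 1 ≠ 0 by rw [hQ2]; omega),
      mul_zero, add_zero] at hxy
    exact absurd hxy (hfz x hx)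
  obtain ⟨h1x, hux⟩ := main x hx
  obtain ⟨h1y, huy⟩ := main y hy
  have hxq : x ^ q = x * x ^ (q - 1) := by
    rw [← pow_succ']; congr 1; omega
  have hyq : y ^ q = y * y ^ (q - 1) := by
    rw [← pow_succ']; congr 1; omega
  have hc0 : x ^ (q - 2) + 3 * x ^ (q ^ 2 - q - 1) ≠ 0 := hfz x hx
  obtain ⟨c, hcdef⟩ : ∃ c : K, c = x ^ (q - 2) + 3 * x ^ (q ^ 2 - q - 1) := ⟨_, rfl⟩
  obtain ⟨u, hudef⟩ : ∃ u : K, u = x ^ (q - 1) := ⟨_, rfl⟩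
  obtain ⟨v, hvdef⟩ : ∃ v : K, v = y ^ (q - 1) := ⟨_, rfl⟩
  rw [← hcdef] at h1x hxy hc0
  rw [← hudef] at h1x hux hxq
  rw [← hvdef] at h1y huy hyq
  rw [← hxy] at h1y
  have hu0 : u ≠ 0 := hudef ▸ pow_ne_zero _ hx
  have hv0 : v ≠ 0 := hvdef ▸ pow_ne_zero _ hy
  have hu3 : u ^ 2 + 3 ≠ 0 := hA3 u hux hu0
  have hv3 : v ^ 2 + 3 ≠ 0 := hA3 v huy hv0
  -- Frobenius of the main identities
  have h2x : c ^ q * x * u ^ 2 = 1 + 3 * u ^ 2 := by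
    have h := congrArg (· ^ q) h1x
    simp only [mul_pow] at h
    rw [hfrob_add, h3q, pow_right_comm, hxq, hux] at h
    field_simp [hu0] at h
    apply mul_right_cancel₀ hu0
    linear_combination u * h
  have h2y : c ^ q * y * v ^ 2 = 1 + 3 * v ^ 2 := by
    have h := congrArg (· ^ q) h1y
    simp only [mul_pow] at h
    rw [hfrob_add, h3q, pow_right_comm, hyq, huy] at h
    field_simp [hv0] at h
    apply mul_right_cancel₀ hv0
    linear_combination v * h
  -- eliminate c and x, y
  have EA : (u ^ 2 + 3) * (y * v) = (v ^ 2 + 3) * (x * u) := by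
    linear_combination (x * u) * h1y - (y * v) * h1x
  have EB : (1 + 3 * u ^ 2) * y * v ^ 2 = (1 + 3 * v ^ 2) * x * u ^ 2 := by
    linear_combination (x * u ^ 2) * h2y - (y * v ^ 2) * h2x
  have star : (u ^ 2 + 3) * (1 + 3 * v ^ 2) * u = (1 + 3 * u ^ 2) * (v ^ 2 + 3) * v := by
    apply mul_left_cancel₀ (mul_ne_zero hy hv0)
    linear_combination ((1 + 3 * v ^ 2) * u) * EA - (v ^ 2 + 3) * EB
  by_cases huv : u = v
  · -- then x = y
    rw [← huv] at EA
    have h1 : y * u = x * u := mul_left_cancel₀ hu3 EA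
    exact (mul_right_cancel₀ hu0 h1).symm
  exfalso
  obtain ⟨A, hAdef⟩ : ∃ A : K, A = (u + 1) * (v - 1) := ⟨_, rfl⟩
  obtain ⟨B, hBdef⟩ : ∃ B : K, B = (u - 1) * (v + 1) := ⟨_, rfl⟩
  have hAB3 : A ^ 3 = B ^ 3 := by
    rw [hAdef, hBdef]; linear_combination (-2 : K) * star
  have hABne : A ≠ B := by
    intro h
    apply huv
    have h2 : 2 * (v - u) = 0 := by rw [hAdef, hBdef] at h; linear_combination h
    have hvu := (mul_eq_zero.mp h2).resolve_left h2K
    linear_combination - hvu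
  have hA0 : A ≠ 0 := by
    intro h
    apply hABne
    have hB : B ^ 3 = 0 := by rw [← hAB3, h]; ring
    rw [h, pow_eq_zero_iff (by norm_num : (3:ℕ) ≠ 0) |>.mp hB]
  have hB0 : B ≠ 0 := by
    intro h
    apply hABne
    have hA : A ^ 3 = 0 := by rw [hAB3, h]; ring
    rw [h, pow_eq_zero_iff (by norm_num : (3:ℕ) ≠ 0) |>.mp hA]
  have hAq : A ^ q = (u⁻¹ + 1) * (v⁻¹ - 1) := by
    rw [hAdef, mul_pow, hfrob_add, hfrob_sub, one_pow, hux, huy]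
  have hBq : B ^ q = (u⁻¹ - 1) * (v⁻¹ + 1) := by
    rw [hBdef, mul_pow, hfrob_add, hfrob_sub, one_pow, hux, huy]
  have hw0 : A / B ≠ 0 := div_ne_zero hA0 hB0
  have hw3 : (A / B) ^ 3 = 1 := by
    rw [div_pow, hAB3, div_self (pow_ne_zero _ hB0)]
  have hwq : (A / B) ^ q = A / B := by
    rw [div_pow, div_eq_div_iff (pow_ne_zero _ hB0) hB0, hAq, hBq, hAdef, hBdef]
    field_simp
    ring
  have hw2 : (A / B) ^ 2 = A / B := by
    have h : (A / B) ^ q = (A / B) ^ (3 * (q / 3) + 2) := by congr 1; omega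
    rw [pow_add, pow_mul, hw3, one_pow, one_mul] at h
    rw [← h, hwq]
  have hw1 : A / B = 1 := by
    apply mul_left_cancel₀ hw0
    rw [mul_one]
    linear_combination hw2
  exact hABne ((div_eq_one_iff_eq hB0).mp hw1)
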